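/- Let K be a commutative semiring, let n ≥ 1, and let T = P_2^4 be the 4×4 swap matrix. Then the ordered matrix product ∏_{i=1}^{n−1} (I_2^{⊗(i−1)} ⊗ T ⊗ I_2^{⊗(n−1−i)}) (factors multiplied left to right in increasing order of i) equals the stride permutation matrix P_2^{2^n}, and it is the two-sided inverse of ∏_{i=1}^{n−1} (I_2^{⊗(n−1−i)} ⊗ T ⊗ I_2^{⊗(i−1)}); in particular, applied to any simple tensor v_1 ⊗ ⋯ ⊗ v_n with each v_i ∈ K², it yields v_n ⊗ v_1 ⊗ ⋯ ⊗ v_{n−1}. -/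

import Mathlib

open Matrix

/-- The `mn`-point stride-`n` permutation, as a permutation of `Fin N` (where `N = m * n`):
it sends the index of `e_i^m ⊗ e_j^n` (i.e. `n*i + j`, zero-based) to the index of
`e_j^n ⊗ e_i^m` (i.e. `m*j + i`). -/
def strideEquiv (N m n : ℕ) (h : N = m * n) : Fin N ≃ Fin N :=
  (finCongr h).trans <|
    finProdFinEquiv.symm.trans <|
      (Equiv.prodComm (Fin m) (Fin n)).trans <|
        finProdFinEquiv.trans (finCongr (by rw [h]; exact Nat.mul_comm n m))

/-- The `mn`-point stride-`n` permutation matrix `P_n^{mn}`: the `N × N` permutation matrix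
(`N = m * n`) determined by `P_n^{mn} · (e_i^m ⊗ e_j^n) = e_j^n ⊗ e_i^m`. -/
def strideMat (K : Type*) [Semiring K] (N m n : ℕ) (h : N = m * n) :
    Matrix (Fin N) (Fin N) K :=
  Matrix.of fun a b => if a = strideEquiv N m n h b then 1 else 0

/-- Kronecker (tensor) product of matrices, with row-major indexing by `Fin`:
the `(n*i + s, q*j + t)` entry of `kron A B` is `A i j * B s t`. -/
def kron {K : Type*} [Mul K] {m n p q : ℕ}
    (A : Matrix (Fin m) (Fin n) K) (B : Matrix (Fin p) (Fin q) K) :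
    Matrix (Fin (m * p)) (Fin (n * q)) K :=
  Matrix.reindex finProdFinEquiv finProdFinEquiv (Matrix.kroneckerMap (· * ·) A B)

/-- Cast a matrix along equalities of its dimensions. -/
def mcast {K : Type*} {a b c d : ℕ} (h₁ : a = b) (h₂ : c = d)
    (A : Matrix (Fin a) (Fin c) K) : Matrix (Fin b) (Fin d) K :=
  Matrix.reindex (finCongr h₁) (finCongr h₂) A

/-- The 4 × 4 swap matrix `T = P_2^4`, with rows `(1,0,0,0), (0,0,1,0), (0,1,0,0), (0,0,0,1)`:
it satisfies `T · (u ⊗ w) = w ⊗ u` for all `u, w ∈ K²`. -/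
def swapT (K : Type*) [Semiring K] : Matrix (Fin (2 * 2)) (Fin (2 * 2)) K :=
  strideMat K (2 * 2) 2 2 rfl

/-- The `j`-th factor (`j` zero-based, so `i = j + 1` in one-based numbering)
`I_2^{⊗(n-1-i)} ⊗ T ⊗ I_2^{⊗(i-1)}`, viewed as a `2^n × 2^n` matrix. -/
def swapFactorA (K : Type*) [Semiring K] (n : ℕ) (j : Fin (n - 1)) :
    Matrix (Fin (2 ^ n)) (Fin (2 ^ n)) K :=
  mcast
    (show 2 ^ (n - 2 - (j : ℕ)) * (2 * 2) * 2 ^ (j : ℕ) = 2 ^ n from by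
      have hj : (j : ℕ) < n - 1 := j.isLt
      rw [show (2 * 2 : ℕ) = 2 ^ 2 from rfl, ← pow_add, ← pow_add]
      congr 1
      omega)
    (show 2 ^ (n - 2 - (j : ℕ)) * (2 * 2) * 2 ^ (j : ℕ) = 2 ^ n from by
      have hj : (j : ℕ) < n - 1 := j.isLt
      rw [show (2 * 2 : ℕ) = 2 ^ 2 from rfl, ← pow_add, ← pow_add]
      congr 1
      omega)
    (kron
      (kron (1 : Matrix (Fin (2 ^ (n - 2 - (j : ℕ)))) (Fin (2 ^ (n - 2 - (j : ℕ)))) K)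
        (swapT K))
      (1 : Matrix (Fin (2 ^ (j : ℕ))) (Fin (2 ^ (j : ℕ))) K))

/-- The `j`-th factor (`j` zero-based, so `i = j + 1` in one-based numbering)
`I_2^{⊗(i-1)} ⊗ T ⊗ I_2^{⊗(n-1-i)}`, viewed as a `2^n × 2^n` matrix. -/
def swapFactorB (K : Type*) [Semiring K] (n : ℕ) (j : Fin (n - 1)) :
    Matrix (Fin (2 ^ n)) (Fin (2 ^ n)) K :=
  mcast
    (show 2 ^ (j : ℕ) * (2 * 2) * 2 ^ (n - 2 - (j : ℕ)) = 2 ^ n from by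
      have hj : (j : ℕ) < n - 1 := j.isLt
      rw [show (2 * 2 : ℕ) = 2 ^ 2 from rfl, ← pow_add, ← pow_add]
      congr 1
      omega)
    (show 2 ^ (j : ℕ) * (2 * 2) * 2 ^ (n - 2 - (j : ℕ)) = 2 ^ n from by
      have hj : (j : ℕ) < n - 1 := j.isLt
      rw [show (2 * 2 : ℕ) = 2 ^ 2 from rfl, ← pow_add, ← pow_add]
      congr 1
      omega)
    (kron
      (kron (1 : Matrix (Fin (2 ^ (j : ℕ))) (Fin (2 ^ (j : ℕ))) K) (swapT K))
      (1 : Matrix (Fin (2 ^ (n - 2 - (j : ℕ)))) (Fin (2 ^ (n - 2 - (j : ℕ)))) K))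


/-! ### Auxiliary machinery for the proof -/

namespace SwapStrideAux

/-- A permutation matrix. -/
def permMat (K : Type*) [Semiring K] {N : ℕ} (σ : Fin N ≃ Fin N) : Matrix (Fin N) (Fin N) K :=
  Matrix.of fun a b => if a = σ b then 1 else 0

variable {K : Type*} [Semiring K]

lemma permMat_refl (N : ℕ) : permMat K (Equiv.refl (Fin N)) = 1 := by
  ext a b
  simp [permMat, Matrix.one_apply]
  exact if_congr Iff.rfl rfl rfl

lemma permMat_mul {N : ℕ} (σ τ : Fin N ≃ Fin N) :
    permMat K σ * permMat K τ = permMat K (τ.trans σ) := by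
  ext a b
  simp only [permMat, Matrix.mul_apply, Matrix.of_apply, ite_mul, one_mul, zero_mul]
  rw [Finset.sum_eq_single (τ b)]
  · simp
    exact if_congr Iff.rfl rfl rfl
  · intro c _ hc; simp [hc]
  · simp

/-- The permutation underlying a Kronecker product of permutation matrices. -/
def kronPerm {m p : ℕ} (σ : Fin m ≃ Fin m) (τ : Fin p ≃ Fin p) : Fin (m * p) ≃ Fin (m * p) :=
  finProdFinEquiv.symm.trans ((σ.prodCongr τ).trans finProdFinEquiv)

lemma kron_permMat {m p : ℕ} (σ : Fin m ≃ Fin m) (τ : Fin p ≃ Fin p) :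
    kron (permMat K σ) (permMat K τ) = permMat K (kronPerm σ τ) := by
  ext a b
  simp only [kron, permMat, kronPerm, Matrix.reindex_apply, Matrix.submatrix_apply,
    Matrix.kroneckerMap_apply, Matrix.of_apply, Equiv.trans_apply, Equiv.prodCongr_apply,
    finProdFinEquiv_symm_apply, Prod.map]
  rw [mul_ite, mul_one, mul_zero, ← ite_and]
  have hiff : (a = finProdFinEquiv (σ b.divNat, τ b.modNat)) ↔
      (a.modNat = τ b.modNat ∧ a.divNat = σ b.divNat) := by
    rw [← Equiv.symm_apply_eq, finProdFinEquiv_symm_apply, Prod.ext_iff]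
    tauto
  simp only [hiff]

lemma mcast_permMat {a b : ℕ} (h : a = b) (σ : Fin a ≃ Fin a) :
    mcast h h (permMat K σ) = permMat K ((finCongr h).symm.trans (σ.trans (finCongr h))) := by
  ext x y
  simp only [mcast, permMat, Matrix.reindex_apply, Matrix.submatrix_apply, Matrix.of_apply,
    Equiv.trans_apply]
  congr 1
  rw [Equiv.symm_apply_eq]

/-- The permutation underlying a factor `I_{2^a} ⊗ T ⊗ I_{2^b}`. -/
def factorPerm (a b n : ℕ) (h : 2 ^ a * (2 * 2) * 2 ^ b = 2 ^ n) : Fin (2 ^ n) ≃ Fin (2 ^ n) :=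
  (finCongr h).symm.trans
    ((kronPerm (kronPerm (Equiv.refl (Fin (2 ^ a))) (strideEquiv (2 * 2) 2 2 rfl))
        (Equiv.refl (Fin (2 ^ b)))).trans (finCongr h))

/-- swap the bits `b` and `b+1`, where `P = 2^b`. -/
def swpF (P x : ℕ) : ℕ := x % P + P * (x / P % 4 % 2 * 2 + x / P % 4 / 2) + 4 * P * (x / P / 4)

/-- rotate the bits above position `log2 P`, the lowest of them going to position `log2 P + m`. -/
def rotF (P m x : ℕ) : ℕ := x % P + P * (x / P % 2 * 2 ^ m + x / P / 2)

lemma strideEquiv_val (N m n : ℕ) (h : N = m * n) (x : Fin N) :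
    (strideEquiv N m n h x : ℕ) = (x : ℕ) / n + m * ((x : ℕ) % n) := by
  simp [strideEquiv, finCongr_apply, Fin.coe_cast, Fin.coe_divNat, Fin.coe_modNat]

lemma factorPerm_val (a b n : ℕ) (h : 2 ^ a * (2 * 2) * 2 ^ b = 2 ^ n) (x : Fin (2 ^ n)) :
    (factorPerm a b n h x : ℕ) = swpF (2 ^ b) (x : ℕ) := by
  simp only [factorPerm, kronPerm, strideEquiv, swpF, Equiv.trans_apply, finCongr_apply,
    finProdFinEquiv_symm_apply, Equiv.prodCongr_apply, Prod.map, Equiv.refl_apply,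
    Equiv.prodComm_apply, Prod.swap, finProdFinEquiv_apply_val, Fin.coe_cast,
    Fin.coe_divNat, Fin.coe_modNat, finCongr_symm]
  ring

lemma mod_decomp (P lo r : ℕ) (hlo : lo < P) : (lo + P * r) % P = lo := by
  rw [Nat.add_mul_mod_self_left, Nat.mod_eq_of_lt hlo]

lemma div_decomp (P lo r : ℕ) (hP : 0 < P) (hlo : lo < P) : (lo + P * r) / P = r := by
  rw [Nat.add_mul_div_left _ _ hP, Nat.div_eq_of_lt hlo, Nat.zero_add]

lemma rot_zero (P x : ℕ) (hP : 0 < P) (hx : x < 2 * P) : rotF P 0 x = x := by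
  have hq : x / P < 2 := (Nat.div_lt_iff_lt_mul hP).2 (by omega)
  rw [rotF, pow_zero]
  generalize hc : x / P = c at hq
  have h : c % 2 * 1 + c / 2 = c := by omega
  rw [h, ← hc]
  exact Nat.mod_add_div x P

lemma rot_swp (P m x : ℕ) (hP : 0 < P) :
    rotF (2 * P) m (swpF P x) = rotF P (m + 1) x := by
  obtain ⟨lo, q, hlo, hx⟩ : ∃ lo q, lo < P ∧ x = lo + P * q :=
    ⟨x % P, x / P, Nat.mod_lt _ hP, (Nat.mod_add_div x P).symm⟩
  subst hx
  obtain ⟨d0, d1, e, hd0, hd1, hq⟩ : ∃ d0 d1 e, d0 < 2 ∧ d1 < 2 ∧ q = d0 + 2 * d1 + 4 * e :=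
    ⟨q % 2, q / 2 % 2, q / 4, by omega, by omega, by omega⟩
  subst hq
  have e1 := mod_decomp P lo (d0 + 2 * d1 + 4 * e) hlo
  have e2 := div_decomp P lo (d0 + 2 * d1 + 4 * e) hP hlo
  have hy : swpF P (lo + P * (d0 + 2 * d1 + 4 * e)) = (lo + P * d1) + 2 * P * (d0 + 2 * e) := by
    rw [swpF, e1, e2]
    have h1 : (d0 + 2 * d1 + 4 * e) % 4 % 2 * 2 + (d0 + 2 * d1 + 4 * e) % 4 / 2 = d0 * 2 + d1 := by
      omega
    have h2 : (d0 + 2 * d1 + 4 * e) / 4 = e := by omega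
    rw [h1, h2]; ring
  have hlo2 : lo + P * d1 < 2 * P := by
    have : P * d1 ≤ P * 1 := Nat.mul_le_mul_left _ (by omega)
    omega
  have h2P : 0 < 2 * P := by omega
  rw [hy, rotF, mod_decomp _ _ _ hlo2, div_decomp _ _ _ h2P hlo2, rotF, e1, e2]
  clear hy e1 e2
  have h3 : (d0 + 2 * e) % 2 = d0 := by omega
  have h4 : (d0 + 2 * e) / 2 = e := by omega
  have h5 : (d0 + 2 * d1 + 4 * e) % 2 = d0 := by omega
  have h6 : (d0 + 2 * d1 + 4 * e) / 2 = d1 + 2 * e := by omega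
  rw [h3, h4, h5, h6, pow_succ]
  ring

lemma swp_invol (P x : ℕ) (hP : 0 < P) : swpF P (swpF P x) = x := by
  obtain ⟨lo, q, hlo, hx⟩ : ∃ lo q, lo < P ∧ x = lo + P * q :=
    ⟨x % P, x / P, Nat.mod_lt _ hP, (Nat.mod_add_div x P).symm⟩
  subst hx
  obtain ⟨d0, d1, e, hd0, hd1, hq⟩ : ∃ d0 d1 e, d0 < 2 ∧ d1 < 2 ∧ q = d0 + 2 * d1 + 4 * e :=
    ⟨q % 2, q / 2 % 2, q / 4, by omega, by omega, by omega⟩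
  subst hq
  have e1 := mod_decomp P lo (d0 + 2 * d1 + 4 * e) hlo
  have e2 := div_decomp P lo (d0 + 2 * d1 + 4 * e) hP hlo
  have hy : swpF P (lo + P * (d0 + 2 * d1 + 4 * e)) = lo + P * (d1 + 2 * d0 + 4 * e) := by
    rw [swpF, e1, e2]
    have h1 : (d0 + 2 * d1 + 4 * e) % 4 % 2 * 2 + (d0 + 2 * d1 + 4 * e) % 4 / 2 = d0 * 2 + d1 := by
      omega
    have h2 : (d0 + 2 * d1 + 4 * e) / 4 = e := by omega
    rw [h1, h2]; ring
  rw [hy, swpF, mod_decomp _ _ _ hlo, div_decomp _ _ _ hP hlo]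
  clear hy e1 e2
  have h1 : (d1 + 2 * d0 + 4 * e) % 4 % 2 * 2 + (d1 + 2 * d0 + 4 * e) % 4 / 2 = d1 * 2 + d0 := by
    omega
  have h2 : (d1 + 2 * d0 + 4 * e) / 4 = e := by omega
  rw [h1, h2]; ring

/-- Fold a family of equivalences over a list; `compE [a, b, c] σ = σ a ∘ σ b ∘ σ c`. -/
def compE {ι : Type*} {β : Type*} : List ι → (ι → β ≃ β) → (β ≃ β)
  | [], _ => Equiv.refl _
  | a :: l, σ => (compE l σ).trans (σ a)

lemma compE_prod {ι : Type*} {N : ℕ} (l : List ι) (σ : ι → Fin N ≃ Fin N) :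
    (l.map fun j => permMat K (σ j)).prod = permMat K (compE l σ) := by
  induction l with
  | nil => simp [compE, permMat_refl]
  | cons a l ih => rw [List.map_cons, List.prod_cons, ih, permMat_mul]; rfl

lemma compE_append {ι : Type*} {β : Type*} (l₁ l₂ : List ι) (σ : ι → β ≃ β) :
    compE (l₁ ++ l₂) σ = (compE l₂ σ).trans (compE l₁ σ) := by
  induction l₁ with
  | nil => simp [compE]
  | cons a l ih =>
    show (compE (l ++ l₂) σ).trans (σ a) = _
    rw [ih]
    exact (Equiv.trans_assoc _ _ _)

lemma compE_map {ι κ : Type*} {β : Type*} (l : List ι) (f : ι → κ) (σ : κ → β ≃ β) :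
    compE (l.map f) σ = compE l (σ ∘ f) := by
  induction l with
  | nil => rfl
  | cons a l ih => show (compE (l.map f) σ).trans _ = _; rw [ih]; rfl

lemma compE_reverse {ι : Type*} {β : Type*} (l : List ι) (σ : ι → β ≃ β) :
    compE l.reverse (fun j => (σ j).symm) = (compE l σ).symm := by
  induction l with
  | nil => simp [compE]
  | cons a l ih =>
    rw [List.reverse_cons, compE_append]
    show ((compE [a] fun j => (σ j).symm)).trans (compE l.reverse fun j => (σ j).symm)
        = ((compE l σ).trans (σ a)).symm
    rw [ih]
    ext x
    simp [compE]

/-- The permutation underlying `swapFactorB`. -/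
def EB (n : ℕ) (j : Fin (n - 1)) : Fin (2 ^ n) ≃ Fin (2 ^ n) :=
  factorPerm (j : ℕ) (n - 2 - (j : ℕ)) n (by
    have hj : (j : ℕ) < n - 1 := j.isLt
    rw [show (2 * 2 : ℕ) = 2 ^ 2 from rfl, ← pow_add, ← pow_add]
    congr 1
    omega)

/-- The permutation underlying `swapFactorA`. -/
def EA (n : ℕ) (j : Fin (n - 1)) : Fin (2 ^ n) ≃ Fin (2 ^ n) :=
  factorPerm (n - 2 - (j : ℕ)) (j : ℕ) n (by
    have hj : (j : ℕ) < n - 1 := j.isLt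
    rw [show (2 * 2 : ℕ) = 2 ^ 2 from rfl, ← pow_add, ← pow_add]
    congr 1
    omega)

lemma swapFactorB_eq (n : ℕ) (j : Fin (n - 1)) :
    swapFactorB K n j = permMat K (EB n j) := by
  unfold swapFactorB
  rw [show swapT K = permMat K (strideEquiv (2 * 2) 2 2 rfl) from rfl,
    show (1 : Matrix (Fin (2 ^ (j : ℕ))) (Fin (2 ^ (j : ℕ))) K)
      = permMat K (Equiv.refl _) from (permMat_refl _).symm,
    show (1 : Matrix (Fin (2 ^ (n - 2 - (j : ℕ)))) (Fin (2 ^ (n - 2 - (j : ℕ)))) K)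
      = permMat K (Equiv.refl _) from (permMat_refl _).symm,
    kron_permMat, kron_permMat, mcast_permMat]
  rfl

lemma swapFactorA_eq (n : ℕ) (j : Fin (n - 1)) :
    swapFactorA K n j = permMat K (EA n j) := by
  unfold swapFactorA
  rw [show swapT K = permMat K (strideEquiv (2 * 2) 2 2 rfl) from rfl,
    show (1 : Matrix (Fin (2 ^ (j : ℕ))) (Fin (2 ^ (j : ℕ))) K)
      = permMat K (Equiv.refl _) from (permMat_refl _).symm,
    show (1 : Matrix (Fin (2 ^ (n - 2 - (j : ℕ)))) (Fin (2 ^ (n - 2 - (j : ℕ)))) K)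
      = permMat K (Equiv.refl _) from (permMat_refl _).symm,
    kron_permMat, kron_permMat, mcast_permMat]
  rfl

lemma EB_val (n : ℕ) (j : Fin (n - 1)) (x : Fin (2 ^ n)) :
    (EB n j x : ℕ) = swpF (2 ^ (n - 2 - (j : ℕ))) (x : ℕ) :=
  factorPerm_val _ _ _ _ x

lemma EA_val (n : ℕ) (j : Fin (n - 1)) (x : Fin (2 ^ n)) :
    (EA n j x : ℕ) = swpF (2 ^ (j : ℕ)) (x : ℕ) :=
  factorPerm_val _ _ _ _ x

lemma EB_symm (n : ℕ) (j : Fin (n - 1)) : (EB n j).symm = EB n j := by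
  apply Equiv.ext; intro x
  apply (EB n j).injective
  rw [Equiv.apply_symm_apply]
  apply Fin.ext
  rw [EB_val, EB_val, swp_invol _ _ (pow_pos two_pos _)]

lemma EA_eq (n : ℕ) (j : Fin (n - 1)) : EA n j = EB n (Fin.rev j) := by
  apply Equiv.ext; intro x
  apply Fin.ext
  rw [EA_val, EB_val]
  have hj : (j : ℕ) < n - 1 := j.isLt
  have : n - 2 - ((Fin.rev j : Fin (n - 1)) : ℕ) = (j : ℕ) := by
    rw [Fin.val_rev]
    omega
  rw [this]

lemma main_val (n : ℕ) (hn : 1 ≤ n) (m : ℕ) (hm : m ≤ n - 1) (x : Fin (2 ^ n)) :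
    ((compE ((List.finRange m).map
        (fun (i : Fin m) => (⟨(i : ℕ), lt_of_lt_of_le i.isLt hm⟩ : Fin (n - 1)))) (EB n)) x : ℕ)
      = rotF (2 ^ (n - 1 - m)) m (x : ℕ) := by
  induction m generalizing x with
  | zero =>
    simp only [List.finRange_zero, List.map_nil]
    show (x : ℕ) = _
    rw [rot_zero _ _ (pow_pos two_pos _)]
    have h2 : 2 * 2 ^ (n - 1 - 0) = 2 ^ n := by
      rw [← pow_succ']
      congr 1
      omega
    rw [h2]
    exact x.isLt
  | succ m ih =>
    have hm' : m ≤ n - 1 := by omega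
    have hlist : (List.finRange (m + 1)).map
          (fun (i : Fin (m + 1)) => (⟨(i : ℕ), lt_of_lt_of_le i.isLt hm⟩ : Fin (n - 1)))
        = ((List.finRange m).map
            (fun (i : Fin m) => (⟨(i : ℕ), lt_of_lt_of_le i.isLt hm'⟩ : Fin (n - 1))))
          ++ [(⟨m, by omega⟩ : Fin (n - 1))] := by
      rw [List.finRange_succ_last, List.map_append, List.map_map]
      rfl
    rw [hlist, compE_append]
    show ((compE _ (EB n)) ((compE [(⟨m, _⟩ : Fin (n - 1))] (EB n)) x) : ℕ) = _
    have hpt : ((compE [(⟨m, by omega⟩ : Fin (n - 1))] (EB n)) x) = EB n ⟨m, by omega⟩ x := rfl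
    rw [hpt, ih hm']
    have hval : ((EB n ⟨m, by omega⟩ x : Fin (2 ^ n)) : ℕ) = swpF (2 ^ (n - 2 - m)) (x : ℕ) :=
      EB_val n ⟨m, by omega⟩ x
    rw [hval]
    have h2 : 2 ^ (n - 1 - m) = 2 * 2 ^ (n - 2 - m) := by
      rw [← pow_succ']
      congr 1
      omega
    rw [h2, rot_swp _ _ _ (pow_pos two_pos _)]
    congr 2
    omega

end SwapStrideAux

/-- For a commutative semiring `K` and `n ≥ 1`, the ordered product
`∏_{i=1}^{n-1} (I_2^{⊗(i-1)} ⊗ T ⊗ I_2^{⊗(n-1-i)})` (factors multiplied left to right in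
increasing order of `i`) equals the stride permutation matrix `P_2^{2^n}`, and it is the
two-sided inverse of `∏_{i=1}^{n-1} (I_2^{⊗(n-1-i)} ⊗ T ⊗ I_2^{⊗(i-1)})`. -/
theorem swap_product_eq_stride_two (K : Type*) [CommSemiring K] (n : ℕ) (hn : 1 ≤ n) :
    ((List.finRange (n - 1)).map (swapFactorB K n)).prod =
      strideMat K (2 ^ n) (2 ^ (n - 1)) 2
        (by
          have h : n - 1 + 1 = n := Nat.sub_add_cancel hn
          calc (2 : ℕ) ^ n = 2 ^ (n - 1 + 1) := by rw [h]
            _ = 2 ^ (n - 1) * 2 := by rw [pow_succ]) ∧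
    ((List.finRange (n - 1)).map (swapFactorB K n)).prod *
        ((List.finRange (n - 1)).map (swapFactorA K n)).prod = 1 ∧
    ((List.finRange (n - 1)).map (swapFactorA K n)).prod *
        ((List.finRange (n - 1)).map (swapFactorB K n)).prod = 1 := by
  classical
  open SwapStrideAux in
  have hB : swapFactorB K n = fun j => permMat K (EB n j) :=
    funext fun j => swapFactorB_eq n j
  have hA : swapFactorA K n = fun j => permMat K (EA n j) :=
    funext fun j => swapFactorA_eq n j
  have hpf : (2 : ℕ) ^ n = 2 ^ (n - 1) * 2 := by
    rw [← pow_succ]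
    congr 1
    omega
  have hcompB : compE (List.finRange (n - 1)) (EB n)
      = strideEquiv (2 ^ n) (2 ^ (n - 1)) 2 hpf := by
    apply Equiv.ext; intro x
    apply Fin.ext
    have hid : (List.finRange (n - 1)).map
        (fun (i : Fin (n - 1)) => (⟨(i : ℕ), lt_of_lt_of_le i.isLt (le_refl (n - 1))⟩ : Fin (n - 1)))
        = List.finRange (n - 1) := by
      have h : (fun i : Fin (n - 1) =>
          (⟨(i : ℕ), lt_of_lt_of_le i.isLt (le_refl (n - 1))⟩ : Fin (n - 1))) = id :=
        funext fun i => Fin.ext rfl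
      rw [h, List.map_id]
    have hmv := main_val n hn (n - 1) le_rfl x
    rw [hid] at hmv
    rw [hmv, strideEquiv_val]
    have h0 : n - 1 - (n - 1) = 0 := by omega
    rw [h0, pow_zero, rotF]
    simp only [Nat.mod_one, Nat.div_one]
    ring
  have hcompA : compE (List.finRange (n - 1)) (EA n)
      = (compE (List.finRange (n - 1)) (EB n)).symm := by
    have h1 : EA n = fun j => EB n (Fin.rev j) := funext (EA_eq n)
    have h2 : (fun j => EB n (Fin.rev j)) = (fun j => (EB n j).symm) ∘ Fin.rev := by
      funext j
      simp [EB_symm]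
    rw [h1, h2, ← compE_map, ← List.finRange_reverse, compE_reverse]
  rw [hA, hB, compE_prod (σ := EB n), compE_prod (σ := EA n)]
  refine ⟨?_, ?_, ?_⟩
  · rw [hcompB]
    rfl
  · rw [permMat_mul, hcompA, Equiv.symm_trans_self, permMat_refl]
  · rw [permMat_mul, hcompA, Equiv.self_trans_symm, permMat_refl]
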